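/- arXiv:0712.4341 — 4 statements merged into one kernel-verified Lean document; each statement's English description precedes it below -/
import Mathlib

section
/- If A is an l-regular language over Σ and r ∈ l, then the scalar product rA, defined by (rA)(ω) = r ∧ A(ω), is an l-regular language. -/
/-- A complete orthomodular lattice. -/
class OrthomodularCompleteLattice (α : Type*) extends CompleteLattice α, Compl α where
  inf_compl_self : ∀ a : α, a ⊓ aᶜ = ⊥
  sup_compl_self : ∀ a : α, a ⊔ aᶜ = ⊤
  compl_compl' : ∀ a : α, aᶜᶜ = a
  compl_antitone : ∀ a b : α, a ≤ b → bᶜ ≤ aᶜ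
  orthomodular : ∀ a b : α, a ≤ b → b = a ⊔ (aᶜ ⊓ b)

/-- An `l`-valued finite automaton (`l`-VFA). -/
structure LVFA (Q A l : Type*) where
  δ : Q → A → Q → l
  init : Q → l
  final : Q → l

/-- The `l`-valued language recognized by an `l`-VFA. -/
def lvfaLang {Q A l : Type*} [OrthomodularCompleteLattice l] (M : LVFA Q A l)
    (w : List A) : l :=
  ⨆ path : Fin (w.length + 1) → Q,
    M.init (path 0) ⊓
      (⨅ i : Fin w.length, M.δ (path i.castSucc) (w.get i) (path i.succ)) ⊓
      M.final (path (Fin.last w.length))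

/-- An `l`-valued deterministic finite automaton (`l`-VDFA). -/
structure LVDFA (Q A l : Type*) where
  next : Q → A → Q
  start : Q
  final : Q → l

/-- The `l`-valued language recognized by an `l`-VDFA. -/
def lvdfaLang {Q A l : Type*} (M : LVDFA Q A l) (w : List A) : l :=
  M.final (w.foldl M.next M.start)

/-- An `l`-valued finite automaton with ε-moves (`ε` is encoded as `none`). -/
structure LVFAe (Q A l : Type*) where
  δ : Q → Option A → Q → l
  init : Q → l
  final : Q → l

/-- The `l`-valued language recognized by an `l`-VFA with ε-moves. -/
def lvfaeLang {Q A l : Type*} [OrthomodularCompleteLattice l] (M : LVFAe Q A l)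
    (w : List A) : l :=
  ⨆ n : ℕ, ⨆ τ : Fin n → Option A, ⨆ _ : (List.ofFn τ).reduceOption = w,
    ⨆ path : Fin (n + 1) → Q,
      M.init (path 0) ⊓
        (⨅ i : Fin n, M.δ (path i.castSucc) (τ i) (path i.succ)) ⊓
        M.final (path (Fin.last n))

/-- An `l`-valued language is `l`-regular if it is recognized by some `l`-VFA. -/
def IsLRegular {A l : Type*} [OrthomodularCompleteLattice l] (f : List A → l) : Prop :=
  ∃ (Q : Type) (_ : Fintype Q) (M : LVFA Q A l), ∀ w, lvfaLang M w = f w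

section Aux

variable {l : Type*} [OrthomodularCompleteLattice l]

/-- The `l`-VFA arising from deterministic data, with crisp transitions. -/
def detLVFA {S A : Type*} (next : S → A → S) (start : S) (fin : S → l) : LVFA S A l where
  δ := fun s a s' => ⨆ _ : s' = next s a, ⊤
  init := fun s => ⨆ _ : s = start, ⊤
  final := fin

theorem foldl_take_succ {α β : Type*} (next : β → α → β) (b : β) (w : List α) (i : Fin w.length) :
    (w.take ((i : ℕ) + 1)).foldl next b = next ((w.take (i : ℕ)).foldl next b) (w.get i) := by
  rw [List.take_succ, List.getElem?_eq_getElem i.isLt, Option.toList_some, List.foldl_append,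
    List.foldl_cons, List.foldl_nil, List.get_eq_getElem]

theorem detLVFA_lang {S A : Type*} (next : S → A → S) (start : S) (fin : S → l) (w : List A) :
    lvfaLang (detLVFA next start fin) w = fin (w.foldl next start) := by
  set c : Fin (w.length + 1) → S := fun i => (w.take (i : ℕ)).foldl next start with hc
  have hc0 : c 0 = start := by simp [hc]
  have hcs : ∀ i : Fin w.length, c i.succ = next (c i.castSucc) (w.get i) := by
    intro i
    simp only [hc, Fin.val_succ, Fin.coe_castSucc]
    exact foldl_take_succ next start w i
  have hcl : c (Fin.last w.length) = w.foldl next start := by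
    simp [hc, Fin.val_last]
  simp only [lvfaLang, detLVFA]
  apply le_antisymm
  · refine iSup_le fun p => ?_
    by_cases h0 : p 0 = start
    · by_cases hs : ∀ i : Fin w.length, p i.succ = next (p i.castSucc) (w.get i)
      · have hp : ∀ i, p i = c i := by
          intro i
          induction i using Fin.induction with
          | zero => rw [h0, hc0]
          | succ j ihj => rw [hs j, ihj, hcs j]
        have hl : p (Fin.last w.length) = w.foldl next start := by rw [hp, hcl]
        exact le_trans inf_le_right (le_of_eq (congrArg fin hl))
      · push_neg at hs
        obtain ⟨i, hi⟩ := hs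
        refine le_trans inf_le_left (le_trans inf_le_right (le_trans (iInf_le _ i) ?_))
        rw [iSup_neg hi]
        exact bot_le
    · refine le_trans inf_le_left (le_trans inf_le_left ?_)
      rw [iSup_neg h0]
      exact bot_le
  · refine le_trans ?_ (le_iSup _ c)
    have h1 : (⨆ _ : c 0 = start, (⊤ : l)) = ⊤ := iSup_pos hc0
    have h2 : (⨅ i : Fin w.length, ⨆ _ : c i.succ = next (c i.castSucc) (w.get i), (⊤ : l)) = ⊤ := by
      rw [iInf_eq_top]
      exact fun i => iSup_pos (hcs i)
    rw [h1, h2, hcl, top_inf_eq, top_inf_eq]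

end Aux

section Det

variable {l : Type*} [OrthomodularCompleteLattice l] {Q A C : Type*}

/-- Value of a recorded transition. -/
def trv (M : LVFA Q A l) (d : C → A) (t : Q × C × Q) : l := M.δ t.1 (d t.2.1) t.2.2

/-- The set of (encoded) transitions used by a path. -/
def pathTr (e : A → C) (w : List A) (p : Fin (w.length + 1) → Q) : Set (Q × C × Q) :=
  Set.range fun i : Fin w.length => ((p i.castSucc, e (w.get i), p i.succ) : Q × C × Q)

/-- One step of the subset construction. -/
def dstep (e : A → C) (S : Set (Q × Set (Q × C × Q) × Q)) (a : A) :
    Set (Q × Set (Q × C × Q) × Q) :=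
  {y | ∃ x ∈ S, ∃ q2 : Q, y = (x.1, insert (x.2.2, e a, q2) x.2.1, q2)}

/-- Start state of the subset construction. -/
def dstart : Set (Q × Set (Q × C × Q) × Q) := {x | x.2.1 = ∅ ∧ x.1 = x.2.2}

/-- Output of the subset construction, with the scalar met *after* the join. -/
def dout (M : LVFA Q A l) (d : C → A) (r : l) (S : Set (Q × Set (Q × C × Q) × Q)) : l :=
  r ⊓ ⨆ x ∈ S, M.init x.1 ⊓ (⨅ t ∈ x.2.1, trv M d t) ⊓ M.final x.2.2

theorem pathTr_cons (e : A → C) (a : A) (u : List A) (p : Fin (u.length + 1 + 1) → Q) :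
    pathTr e (a :: u) p
      = insert (p 0, e a, p (Fin.succ 0)) (pathTr e u (Fin.tail p)) := by
  unfold pathTr
  have h : (fun i : Fin (u.length + 1) =>
        ((p i.castSucc, e ((a :: u).get i), p i.succ) : Q × C × Q))
      = Fin.cons (p 0, e a, p (Fin.succ 0))
          (fun i : Fin u.length =>
            ((Fin.tail p i.castSucc, e (u.get i), Fin.tail p i.succ) : Q × C × Q)) := by
    funext i
    refine Fin.cases ?_ ?_ i
    · rfl
    · intro j
      rw [Fin.cons_succ]
      refine Prod.ext ?_ (Prod.ext ?_ ?_)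
      · show p (j.succ.castSucc) = p (j.castSucc.succ)
        rw [Fin.succ_castSucc]
      · rfl
      · rfl
  show Set.range (fun i : Fin (u.length + 1) =>
      ((p i.castSucc, e ((a :: u).get i), p i.succ) : Q × C × Q)) = _
  rw [h, Fin.range_cons]

theorem mem_foldl_dstep (e : A → C) (u : List A) (S : Set (Q × Set (Q × C × Q) × Q))
    (x : Q × Set (Q × C × Q) × Q) :
    x ∈ u.foldl (dstep e) S ↔
      ∃ y ∈ S, ∃ p : Fin (u.length + 1) → Q, p 0 = y.2.2 ∧
        x = (y.1, y.2.1 ∪ pathTr e u p, p (Fin.last u.length)) := by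
  induction u generalizing S with
  | nil =>
    simp only [List.foldl_nil]
    constructor
    · intro hx
      refine ⟨x, hx, fun _ => x.2.2, rfl, ?_⟩
      have h : pathTr e [] (fun _ => x.2.2) = (∅ : Set (Q × C × Q)) := by
        simp [pathTr]
      rw [h, Set.union_empty]
    · rintro ⟨y, hy, p, hp0, rfl⟩
      have h : pathTr e ([] : List A) p = (∅ : Set (Q × C × Q)) := by
        simp [pathTr]
      rw [h, Set.union_empty]
      show (y.1, y.2.1, p (Fin.last 0)) ∈ S
      have : p (Fin.last 0) = y.2.2 := hp0
      rw [this]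
      exact hy
  | cons a u ih =>
    rw [List.foldl_cons, ih]
    simp only [List.length_cons]
    constructor
    · rintro ⟨y, hy, p', hp0, rfl⟩
      obtain ⟨z, hz, q2, rfl⟩ := hy
      have hp0' : p' 0 = q2 := hp0
      refine ⟨z, hz, Fin.cons z.2.2 p', Fin.cons_zero _ _, ?_⟩
      have h2 : pathTr e (a :: u) (Fin.cons z.2.2 p')
          = insert (z.2.2, e a, q2) (pathTr e u p') := by
        rw [pathTr_cons e a u (Fin.cons z.2.2 p'), Fin.tail_cons, Fin.cons_zero, Fin.cons_succ,
          hp0']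
      have h3 : (Fin.cons z.2.2 p' : Fin (u.length + 1 + 1) → Q) (Fin.last (u.length + 1))
          = p' (Fin.last u.length) := by
        rw [← Fin.succ_last, Fin.cons_succ]
      show ((z.1, insert (z.2.2, e a, q2) z.2.1, q2).1,
          insert (z.2.2, e a, q2) z.2.1 ∪ pathTr e u p', p' (Fin.last u.length))
        = (z.1, z.2.1 ∪ pathTr e (a :: u) (Fin.cons z.2.2 p'),
            (Fin.cons z.2.2 p' : Fin (u.length + 1 + 1) → Q) (Fin.last (u.length + 1)))
      rw [h2, h3, Set.insert_union, Set.union_insert]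
    · rintro ⟨z, hz, p, hp0, rfl⟩
      refine ⟨(z.1, insert (z.2.2, e a, p (Fin.succ 0)) z.2.1, p (Fin.succ 0)),
        ⟨z, hz, p (Fin.succ 0), rfl⟩, Fin.tail p, rfl, ?_⟩
      have h2 : pathTr e (a :: u) p
          = insert (z.2.2, e a, p (Fin.succ 0)) (pathTr e u (Fin.tail p)) := by
        rw [pathTr_cons e a u p, hp0]
      have h3 : p (Fin.last (u.length + 1)) = Fin.tail p (Fin.last u.length) := by
        rw [← Fin.succ_last]
        rfl
      show (z.1, z.2.1 ∪ pathTr e (a :: u) p, p (Fin.last (u.length + 1)))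
        = ((z.1, insert (z.2.2, e a, p (Fin.succ 0)) z.2.1, p (Fin.succ 0)).1,
            insert (z.2.2, e a, p (Fin.succ 0)) z.2.1 ∪ pathTr e u (Fin.tail p),
            Fin.tail p (Fin.last u.length))
      rw [h2, h3, Set.insert_union, Set.union_insert]

theorem mem_run (e : A → C) (w : List A) (x : Q × Set (Q × C × Q) × Q) :
    x ∈ w.foldl (dstep e) dstart ↔
      ∃ p : Fin (w.length + 1) → Q, x = (p 0, pathTr e w p, p (Fin.last w.length)) := by
  rw [mem_foldl_dstep]
  constructor
  · rintro ⟨y, hy, p, hp0, rfl⟩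
    obtain ⟨h1, h2⟩ := hy
    exact ⟨p, by rw [h1, Set.empty_union, h2, ← hp0]⟩
  · rintro ⟨p, rfl⟩
    exact ⟨(p 0, ∅, p 0), ⟨rfl, rfl⟩, p, rfl, by rw [Set.empty_union]⟩

theorem inf_pathTr (M : LVFA Q A l) (e : A → C) (d : C → A) (hde : ∀ a, d (e a) = a)
    (w : List A) (p : Fin (w.length + 1) → Q) :
    (⨅ t ∈ pathTr e w p, trv M d t)
      = ⨅ i : Fin w.length, M.δ (p i.castSucc) (w.get i) (p i.succ) := by
  unfold pathTr
  rw [iInf_range]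
  exact iInf_congr fun i => by simp [trv, hde]

theorem dout_eq (M : LVFA Q A l) (e : A → C) (d : C → A) (hde : ∀ a, d (e a) = a)
    (r : l) (w : List A) :
    dout M d r (w.foldl (dstep e) dstart) = r ⊓ lvfaLang M w := by
  unfold dout
  congr 1
  simp only [lvfaLang]
  apply le_antisymm
  · refine iSup₂_le fun x hx => ?_
    rw [mem_run e w x] at hx
    obtain ⟨p, rfl⟩ := hx
    refine le_trans (le_of_eq ?_) (le_iSup _ p)
    show M.init (p 0) ⊓ (⨅ t ∈ pathTr e w p, trv M d t) ⊓ M.final (p (Fin.last w.length)) = _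
    rw [inf_pathTr M e d hde]
  · refine iSup_le fun p => ?_
    have hx : ((p 0, pathTr e w p, p (Fin.last w.length)) : Q × Set (Q × C × Q) × Q)
        ∈ w.foldl (dstep e) dstart := (mem_run e w _).2 ⟨p, rfl⟩
    refine le_trans (le_of_eq ?_) (le_iSup₂ _ hx)
    show _ = M.init (p 0) ⊓ (⨅ t ∈ pathTr e w p, trv M d t) ⊓ M.final (p (Fin.last w.length))
    rw [inf_pathTr M e d hde]

end Det

/-- `l`-regular languages are closed under scalar product. -/
theorem lregular_scalar {l A : Type*} [OrthomodularCompleteLattice l] [Fintype A]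
    (f : List A → l) (r : l) (hf : IsLRegular f) :
    IsLRegular (fun w => r ⊓ f w) := by
  classical
  obtain ⟨Q, hQ, M, hM⟩ := hf
  haveI := hQ
  refine ⟨Set (Q × Set (Q × Fin (Fintype.card A) × Q) × Q), inferInstance,
    detLVFA (dstep (Fintype.equivFin A)) dstart (dout M (⇑(Fintype.equivFin A).symm) r),
    fun w => ?_⟩
  rw [detLVFA_lang, dout_eq M (⇑(Fintype.equivFin A)) (⇑(Fintype.equivFin A).symm)
    (fun a => (Fintype.equivFin A).symm_apply_apply a) r w, hM w]
end

section
/- If A is an l-regular language over Σ, then its complement A⊥, defined by A⊥(ω) = (A(ω))⊥, is an l-regular language. -/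
open scoped Classical

noncomputable section LRegAux

namespace LRegAux

variable {l : Type*} [OrthomodularCompleteLattice l]
variable {Q : Type} [Fintype Q] {A : Type*} [Fintype A]

/-- A deterministic automaton, seen as an `l`-VFA. -/
def detLVFA (next : Q → A → Q) (s0 : Q) (fin : Q → l) : LVFA Q A l where
  δ q a q' := if q' = next q a then ⊤ else ⊥
  init q := if q = s0 then ⊤ else ⊥
  final := fin

lemma foldl_take_succ (next : Q → A → Q) (s0 : Q) (w : List A) (i : ℕ)
    (hi : i < w.length) :
    (w.take (i + 1)).foldl next s0 = next ((w.take i).foldl next s0) (w.get ⟨i, hi⟩) := by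
  rw [show w.get ⟨i, hi⟩ = w[i] from rfl, ← List.take_concat_get' w i hi, List.foldl_append]
  rfl

/-- A deterministic `l`-VFA recognizes what the underlying DFA computes. -/
lemma lvfaLang_det (next : Q → A → Q) (s0 : Q) (fin : Q → l) (w : List A) :
    lvfaLang (detLVFA next s0 fin) w = fin (w.foldl next s0) := by
  rw [lvfaLang]
  set n := w.length with hn
  apply le_antisymm
  · apply iSup_le
    intro p
    by_cases h0 : p 0 = s0
    · by_cases hstep : ∀ i : Fin n, p i.succ = next (p i.castSucc) (w.get i)
      · have key : ∀ j : ℕ, (hj : j ≤ n) → p ⟨j, Nat.lt_succ_of_le hj⟩ =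
            (w.take j).foldl next s0 := by
          intro j
          induction j with
          | zero => intro _; simpa using h0
          | succ j ih =>
            intro hj
            have hj' : j ≤ n := Nat.le_of_succ_le hj
            have hjlt : j < n := hj
            have := hstep ⟨j, hjlt⟩
            have hsucc : (⟨j, hjlt⟩ : Fin n).succ = ⟨j + 1, Nat.lt_succ_of_le hj⟩ := rfl
            have hcast : (⟨j, hjlt⟩ : Fin n).castSucc = ⟨j, Nat.lt_succ_of_le hj'⟩ := rfl
            rw [hsucc, hcast] at this
            rw [this, ih hj', foldl_take_succ next s0 w j hjlt]
        have hlast : p (Fin.last n) = w.foldl next s0 := by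
          have := key n le_rfl
          simpa [Fin.last, hn, List.take_length] using this
        calc _ ≤ (detLVFA next s0 fin).final (p (Fin.last n)) := inf_le_right
        _ = fin (w.foldl next s0) := by rw [show (detLVFA next s0 fin).final = fin from rfl, hlast]
      · push_neg at hstep
        obtain ⟨i, hi⟩ := hstep
        have h1 : (detLVFA next s0 fin).δ (p i.castSucc) (w.get i) (p i.succ) = ⊥ :=
          if_neg hi
        calc _ ≤ (⨅ i : Fin n, (detLVFA next s0 fin).δ (p i.castSucc) (w.get i) (p i.succ)) :=
              le_trans inf_le_left inf_le_right
        _ ≤ (detLVFA next s0 fin).δ (p i.castSucc) (w.get i) (p i.succ) := iInf_le _ i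
        _ = ⊥ := h1
        _ ≤ _ := bot_le
    · have h1 : (detLVFA next s0 fin).init (p 0) = ⊥ := if_neg h0
      calc _ ≤ (detLVFA next s0 fin).init (p 0) := le_trans inf_le_left inf_le_left
      _ = ⊥ := h1
      _ ≤ _ := bot_le
  · set pw : Fin (n + 1) → Q := fun i => (w.take i).foldl next s0 with hpw
    have h0 : pw 0 = s0 := by simp [hpw]
    have hstep : ∀ i : Fin n, pw i.succ = next (pw i.castSucc) (w.get i) := by
      intro i
      have : (i.succ : ℕ) = (i : ℕ) + 1 := rfl
      simp only [hpw, this, Fin.coe_castSucc]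
      exact foldl_take_succ next s0 w i i.isLt
    have hlast : pw (Fin.last n) = w.foldl next s0 := by
      simp [hpw, Fin.last, hn, List.take_length]
    have : fin (w.foldl next s0) =
        (detLVFA next s0 fin).init (pw 0) ⊓
          (⨅ i : Fin n, (detLVFA next s0 fin).δ (pw i.castSucc) (w.get i) (pw i.succ)) ⊓
          (detLVFA next s0 fin).final (pw (Fin.last n)) := by
      have hi : (detLVFA next s0 fin).init (pw 0) = ⊤ := if_pos h0
      have hd : ∀ i : Fin n,
          (detLVFA next s0 fin).δ (pw i.castSucc) (w.get i) (pw i.succ) = ⊤ :=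
        fun i => if_pos (hstep i)
      simp only [hi, hd, hlast, top_inf_eq, iInf_top, inf_top_eq]
      rfl
    rw [this]
    exact le_iSup (fun path : Fin (w.length + 1) → Q =>
      (detLVFA next s0 fin).init (path 0) ⊓
        (⨅ i : Fin w.length, (detLVFA next s0 fin).δ (path i.castSucc) (w.get i) (path i.succ)) ⊓
        (detLVFA next s0 fin).final (path (Fin.last w.length))) pw

variable (M : LVFA Q A l) {k : ℕ} (ε : A ≃ Fin k)

/-- Value of an encoded edge. -/
def ev (e : Q × Fin k × Q) : l := M.δ e.1 (ε.symm e.2.1) e.2.2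

/-- Edge set of a path. -/
def pathEdges (n : ℕ) (u : Fin n → A) (p : Fin (n + 1) → Q) : Finset (Q × Fin k × Q) :=
  Finset.image (fun i : Fin n => (p i.castSucc, ε (u i), p i.succ)) Finset.univ

/-- Paths with prescribed endpoints. -/
def Path (n : ℕ) (q q' : Q) : Type :=
  {p : Fin (n + 1) → Q // p 0 = q ∧ p (Fin.last n) = q'}

instance (n : ℕ) (q q' : Q) : Fintype (Path (Q := Q) n q q') := by
  unfold Path; infer_instance

/-- The state type of the subset construction. -/
abbrev St (Q : Type) (k : ℕ) : Type := Q → Q → Finset (Finset (Q × Fin k × Q))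

/-- Achievable edge-sets of paths. -/
def reachSet (n : ℕ) (u : Fin n → A) : St Q k := fun q q' =>
  Finset.image (fun p : Path (Q := Q) n q q' => pathEdges ε n u p.1) Finset.univ

def startSt : St Q k := fun q q' => if q = q' then {∅} else ∅

def stepSt (a : A) (s : St Q k) : St Q k := fun q q'' =>
  Finset.univ.biUnion fun q' => (s q q').image (insert (q', ε a, q''))

lemma pathEdges_inf (n : ℕ) (u : Fin n → A) (p : Fin (n + 1) → Q) :
    (pathEdges ε n u p).inf (ev M ε) =
      ⨅ i : Fin n, M.δ (p i.castSucc) (u i) (p i.succ) := by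
  rw [pathEdges, Finset.inf_image]
  rw [show ((Finset.univ : Finset (Fin n)).inf
      ((ev M ε) ∘ fun i => (p i.castSucc, ε (u i), p i.succ))) =
      ⨅ i ∈ (Finset.univ : Finset (Fin n)),
        (ev M ε) (p i.castSucc, ε (u i), p i.succ) from Finset.inf_eq_iInf _ _]
  simp [ev]

/-- Evaluation of a state. -/
def evalSt (s : St Q k) : l :=
  ⨆ q : Q, ⨆ q' : Q, ⨆ es : Finset (Q × Fin k × Q), ⨆ _ : es ∈ s q q',
    M.init q ⊓ es.inf (ev M ε) ⊓ M.final q'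

lemma evalSt_reachSet (n : ℕ) (u : Fin n → A) :
    evalSt M ε (reachSet ε n u) =
      ⨆ p : Fin (n + 1) → Q,
        M.init (p 0) ⊓ (⨅ i : Fin n, M.δ (p i.castSucc) (u i) (p i.succ)) ⊓
          M.final (p (Fin.last n)) := by
  apply le_antisymm
  · apply iSup_le; intro q
    apply iSup_le; intro q'
    apply iSup_le; intro es
    apply iSup_le; intro hes
    rw [reachSet, Finset.mem_image] at hes
    obtain ⟨p, -, rfl⟩ := hes
    rw [pathEdges_inf]
    calc M.init q ⊓ (⨅ i : Fin n, M.δ (p.1 i.castSucc) (u i) (p.1 i.succ)) ⊓ M.final q'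
        = M.init (p.1 0) ⊓ (⨅ i : Fin n, M.δ (p.1 i.castSucc) (u i) (p.1 i.succ)) ⊓
          M.final (p.1 (Fin.last n)) := by rw [p.2.1, p.2.2]
      _ ≤ _ := le_iSup (fun p : Fin (n + 1) → Q =>
          M.init (p 0) ⊓ (⨅ i : Fin n, M.δ (p i.castSucc) (u i) (p i.succ)) ⊓
            M.final (p (Fin.last n))) p.1
  · apply iSup_le; intro p
    have hmem : pathEdges ε n u p ∈ reachSet ε n u (p 0) (p (Fin.last n)) := by
      rw [reachSet, Finset.mem_image]
      exact ⟨⟨p, rfl, rfl⟩, Finset.mem_univ _, rfl⟩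
    calc M.init (p 0) ⊓ (⨅ i : Fin n, M.δ (p i.castSucc) (u i) (p i.succ)) ⊓
          M.final (p (Fin.last n))
        = M.init (p 0) ⊓ (pathEdges ε n u p).inf (ev M ε) ⊓ M.final (p (Fin.last n)) := by
          rw [pathEdges_inf]
      _ ≤ _ := by
          refine le_trans ?_ (le_iSup _ (p 0))
          refine le_trans ?_ (le_iSup _ (p (Fin.last n)))
          refine le_trans ?_ (le_iSup _ (pathEdges ε n u p))
          exact le_iSup_of_le hmem le_rfl

lemma pathEdges_zero (u : Fin 0 → A) (p : Fin 1 → Q) : pathEdges ε 0 u p = ∅ := by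
  simp [pathEdges]

lemma reachSet_zero (u : Fin 0 → A) : reachSet (Q := Q) ε 0 u = startSt := by
  funext q q'
  rw [reachSet, startSt]
  by_cases h : q = q'
  · subst h
    rw [if_pos rfl]
    have hne : (Finset.univ : Finset (Path (Q := Q) 0 q q)).Nonempty :=
      ⟨⟨fun _ => q, rfl, rfl⟩, Finset.mem_univ _⟩
    rw [show (fun p : Path (Q := Q) 0 q q => pathEdges ε 0 u p.1) =
        fun _ => (∅ : Finset (Q × Fin k × Q)) from funext fun p => pathEdges_zero ε u p.1]
    exact Finset.image_const hne _
  · rw [if_neg h]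
    have : IsEmpty (Path (Q := Q) 0 q q') :=
      ⟨fun p => h ((p.2.1).symm.trans
        ((congrArg p.1 (show (0 : Fin (0 + 1)) = Fin.last 0 from rfl)).trans p.2.2))⟩
    rw [Finset.univ_eq_empty, Finset.image_empty]

lemma pathEdges_snoc (n : ℕ) (u : Fin n → A) (a : A) (p : Fin (n + 1) → Q) (c : Q) :
    pathEdges ε (n + 1) (Fin.snoc u a) (Fin.snoc p c) =
      insert (p (Fin.last n), ε a, c) (pathEdges ε n u p) := by
  have hlastf : ((Fin.snoc p c : Fin (n + 2) → Q) (Fin.last n).castSucc,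
      ε ((Fin.snoc u a : Fin (n + 1) → A) (Fin.last n)),
      (Fin.snoc p c : Fin (n + 2) → Q) (Fin.last n).succ) = (p (Fin.last n), ε a, c) := by
    rw [Fin.snoc_castSucc, Fin.snoc_last, Fin.succ_last, Fin.snoc_last]
  have hcastf : ∀ j : Fin n,
      ((Fin.snoc p c : Fin (n + 2) → Q) j.castSucc.castSucc,
        ε ((Fin.snoc u a : Fin (n + 1) → A) j.castSucc),
        (Fin.snoc p c : Fin (n + 2) → Q) j.castSucc.succ) =
      (p j.castSucc, ε (u j), p j.succ) := by
    intro j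
    rw [Fin.snoc_castSucc, Fin.snoc_castSucc, Fin.succ_castSucc, Fin.snoc_castSucc]
  ext e
  simp only [pathEdges, Finset.mem_image, Finset.mem_univ, true_and, Finset.mem_insert]
  constructor
  · rintro ⟨i, rfl⟩
    induction i using Fin.lastCases with
    | last => left; exact hlastf
    | cast j => right; exact ⟨j, (hcastf j).symm⟩
  · rintro (rfl | ⟨j, rfl⟩)
    · exact ⟨Fin.last n, hlastf⟩
    · exact ⟨j.castSucc, hcastf j⟩

lemma reachSet_snoc (n : ℕ) (u : Fin n → A) (a : A) :
    reachSet (Q := Q) ε (n + 1) (Fin.snoc u a) = stepSt ε a (reachSet ε n u) := by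
  funext q q''
  ext es
  simp only [reachSet, stepSt, Finset.mem_biUnion, Finset.mem_univ, true_and,
    Finset.mem_image]
  constructor
  · rintro ⟨⟨p, hp0, hpl⟩, rfl⟩
    have hP : p = Fin.snoc (Fin.init p) q'' := by
      conv_lhs => rw [← Fin.snoc_init_self p]
      rw [hpl]
    refine ⟨Fin.init p (Fin.last n), pathEdges ε n u (Fin.init p),
      ⟨⟨Fin.init p, ?_, rfl⟩, rfl⟩, ?_⟩
    · show p (Fin.castSucc 0) = q
      rw [Fin.castSucc_zero, hp0]
    · show insert (Fin.init p (Fin.last n), ε a, q'') (pathEdges ε n u (Fin.init p)) =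
        pathEdges ε (n + 1) (Fin.snoc u a) p
      conv_rhs => rw [hP]
      rw [pathEdges_snoc]
  · rintro ⟨q', x, ⟨⟨p, hp0, hpl⟩, rfl⟩, rfl⟩
    refine ⟨⟨Fin.snoc p q'', ?_, ?_⟩, ?_⟩
    · show (Fin.snoc p q'' : Fin (n + 2) → Q) 0 = q
      rw [← Fin.castSucc_zero, Fin.snoc_castSucc, hp0]
    · show (Fin.snoc p q'' : Fin (n + 2) → Q) (Fin.last (n + 1)) = q''
      rw [Fin.snoc_last]
    · rw [pathEdges_snoc]
      conv_lhs => rw [hpl]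

lemma reachSet_congr {m n : ℕ} (h : m = n) (u : Fin n → A) :
    reachSet (Q := Q) ε m (fun i => u (Fin.cast h i)) = reachSet ε n u := by
  subst h
  rfl

lemma get_concat (w : List A) (a : A) (h : (w ++ [a]).length = w.length + 1)
    (i : Fin ((w ++ [a]).length)) :
    (w ++ [a]).get i = (Fin.snoc w.get a : Fin (w.length + 1) → A) (Fin.cast h i) := by
  rcases i with ⟨iv, hiv⟩
  by_cases hlt : iv < w.length
  · have h1 : (w ++ [a]).get ⟨iv, hiv⟩ = w.get ⟨iv, hlt⟩ := by
      simp [List.getElem_append_left hlt]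
    have h2 : Fin.cast h ⟨iv, hiv⟩ = Fin.castSucc ⟨iv, hlt⟩ := rfl
    rw [h1, h2, Fin.snoc_castSucc]
  · have hiv' : iv = w.length := by
      have := h ▸ hiv
      omega
    subst hiv'
    have h2 : Fin.cast h ⟨w.length, hiv⟩ = Fin.last w.length := rfl
    rw [h2, Fin.snoc_last]
    show (w ++ [a])[w.length] = a
    simp

end LRegAux

end LRegAux

/-- `l`-regular languages are closed under (ortho)complement. -/
theorem lregular_compl {l A : Type*} [OrthomodularCompleteLattice l] [Fintype A]
    (f : List A → l) (hf : IsLRegular f) :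
    IsLRegular (fun w => (f w)ᶜ) := by
  classical
  obtain ⟨Q, hQ, M, hM⟩ := hf
  haveI := hQ
  set ε := Fintype.equivFin A with hε
  haveI inst : Fintype (LRegAux.St Q (Fintype.card A)) := by
    unfold LRegAux.St
    infer_instance
  refine ⟨LRegAux.St Q (Fintype.card A), inst,
    LRegAux.detLVFA (fun s a => LRegAux.stepSt ε a s) (LRegAux.startSt (Q := Q) (k := Fintype.card A))
      (fun s => (LRegAux.evalSt M ε s)ᶜ), fun w => ?_⟩
  rw [LRegAux.lvfaLang_det]
  have hfold : w.foldl (fun s a => LRegAux.stepSt ε a s) (LRegAux.startSt (Q := Q) (k := Fintype.card A)) =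
      LRegAux.reachSet ε w.length w.get := by
    induction w using List.reverseRecOn with
    | nil => exact (LRegAux.reachSet_zero ε (List.get ([] : List A))).symm
    | append_singleton w a ih =>
      rw [List.foldl_append, List.foldl_cons, List.foldl_nil, ih, ← LRegAux.reachSet_snoc]
      have h : (w ++ [a]).length = w.length + 1 := by simp
      rw [show ((w ++ [a]).get) =
          fun i => (Fin.snoc w.get a : Fin (w.length + 1) → A) (Fin.cast h i) from
        funext (LRegAux.get_concat w a h)]
      exact (LRegAux.reachSet_congr ε h (Fin.snoc w.get a)).symm
  rw [hfold, LRegAux.evalSt_reachSet]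
  show (lvfaLang M w)ᶜ = (f w)ᶜ
  rw [hM]
end

section
/- If A and B are l-regular languages over Σ, then their concatenation AB, defined by (AB)(ω) = ⋁{ A(ω₁) ∧ B(ω₂) : ω₁ω₂ = ω }, is an l-regular language. -/
section DFAtoNFA
variable {l : Type*} [OrthomodularCompleteLattice l] {Q : Type} [Fintype Q] {A : Type*}

/-- canonical run of a DFA -/
noncomputable def drun (D : LVDFA Q A l) (w : List A) (i : Fin (w.length + 1)) : Q :=
  (w.take i).foldl D.next D.start

lemma drun_zero (D : LVDFA Q A l) (w : List A) : drun D w 0 = D.start := by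
  simp [drun]

lemma drun_last (D : LVDFA Q A l) (w : List A) :
    drun D w (Fin.last w.length) = w.foldl D.next D.start := by
  simp [drun]

lemma drun_succ (D : LVDFA Q A l) (w : List A) (i : Fin w.length) :
    drun D w i.succ = D.next (drun D w i.castSucc) (w.get i) := by
  have h : (i : ℕ) < w.length := i.isLt
  have := List.take_concat_get h
  simp only [drun, Fin.val_succ, Fin.coe_castSucc, ← this, List.concat_eq_append,
    List.foldl_append, List.foldl_cons, List.foldl_nil, List.get_eq_getElem]

theorem lvdfa_regular (D : LVDFA Q A l) : IsLRegular (lvdfaLang D) := by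
  classical
  refine ⟨Q, inferInstance, ⟨fun q σ q' => if q' = D.next q σ then ⊤ else ⊥,
    fun q => if q = D.start then ⊤ else ⊥, D.final⟩, ?_⟩
  intro w
  apply le_antisymm
  · refine iSup_le fun path => ?_
    by_cases h0 : path 0 = D.start
    · by_cases hstep : ∀ i : Fin w.length, path i.succ = D.next (path i.castSucc) (w.get i)
      · have hrun : ∀ j : Fin (w.length + 1), path j = drun D w j := by
          intro j
          induction j using Fin.induction with
          | zero => rw [h0, drun_zero]
          | succ i ih => rw [hstep i, drun_succ, ih]
        calc _ ≤ D.final (path (Fin.last w.length)) := inf_le_right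
          _ = _ := by rw [hrun, drun_last]; rfl
      · push_neg at hstep
        obtain ⟨i, hi⟩ := hstep
        refine le_trans inf_le_left (le_trans inf_le_right ?_)
        refine le_trans (iInf_le _ i) ?_
        simp only [if_neg hi]
        exact bot_le
    · refine le_trans inf_le_left (le_trans inf_le_left ?_)
      simp only [if_neg h0]
      exact bot_le
  · refine le_trans ?_ (le_iSup _ (drun D w))
    simp only [drun_zero, drun_succ, drun_last, if_pos rfl, iInf_const, lvdfaLang]
    simp
end DFAtoNFA
section NFAtoDFA
set_option linter.unusedSectionVars false
variable {l : Type*} [OrthomodularCompleteLattice l] {Q : Type} [Fintype Q]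
  {A : Type*} [Fintype A]

/-- Edge type: states with an encoded letter. -/
abbrev PEdge (Q : Type) (A : Type*) [Fintype A] : Type := Q × Fin (Fintype.card A) × Q

/-- Profile: for each pair of states, the set of edge-sets of paths. -/
abbrev Profile (Q : Type) (A : Type*) [Fintype A] : Type := Q → Q → Set (Set (PEdge Q A))

noncomputable def enc {A : Type*} [Fintype A] (σ : A) : Fin (Fintype.card A) :=
  Fintype.equivFin A σ

noncomputable def profileOf (w : List A) : Profile Q A := fun q q' =>
  {E | ∃ path : Fin (w.length + 1) → Q, path 0 = q ∧ path (Fin.last w.length) = q' ∧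
    E = Set.range fun i : Fin w.length => (path i.castSucc, enc (w.get i), path i.succ)}

noncomputable def pstep (p : Profile Q A) (σ : A) : Profile Q A := fun q q' =>
  {E | ∃ r E₀, E₀ ∈ p q r ∧ E = insert (r, enc σ, q') E₀}

lemma range_fin_succ {n : ℕ} {β : Type*} (f : Fin (n + 1) → β) :
    Set.range f = insert (f 0) (Set.range fun i : Fin n => f i.succ) := by
  ext b
  simp only [Set.mem_range, Set.mem_insert_iff]
  constructor
  · rintro ⟨i, rfl⟩
    induction i using Fin.cases with
    | zero => exact Or.inl rfl
    | succ j => exact Or.inr ⟨j, rfl⟩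
  · rintro (rfl | ⟨j, rfl⟩)
    · exact ⟨0, rfl⟩
    · exact ⟨j.succ, rfl⟩

lemma profileOf_nil (q q' : Q) :
    profileOf ([] : List A) q q' = {E | q = q' ∧ E = ∅} := by
  ext E
  simp only [profileOf, Set.mem_setOf_eq]
  constructor
  · rintro ⟨path, rfl, rfl, rfl⟩
    exact ⟨rfl, by simp⟩
  · rintro ⟨rfl, rfl⟩
    exact ⟨fun _ => q, rfl, rfl, by simp⟩
lemma profileOf_cons (σ : A) (w : List A) (q q' : Q) :
    profileOf (σ :: w) q q' =
      {E | ∃ r E₁, E₁ ∈ profileOf w r q' ∧ E = insert (q, enc σ, r) E₁} := by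
  ext E
  simp only [profileOf, Set.mem_setOf_eq]
  constructor
  · rintro ⟨path, rfl, rfl, rfl⟩
    refine ⟨path ((0 : Fin (w.length + 1)).succ),
      Set.range fun i : Fin w.length =>
        ((fun j : Fin (w.length + 1) => path j.succ) i.castSucc, enc (w.get i),
         (fun j : Fin (w.length + 1) => path j.succ) i.succ),
      ⟨fun j => path j.succ, rfl, congrArg path (Fin.succ_last w.length), rfl⟩, ?_⟩
    rw [range_fin_succ]
    rfl
  · rintro ⟨r, E₁, ⟨path, h0, hl, rfl⟩, rfl⟩
    refine ⟨Fin.cons q path, by simp, ?_, ?_⟩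
    · have he : (Fin.last (σ :: w).length) = (Fin.last w.length).succ := rfl
      rw [he, Fin.cons_succ]
      exact hl
    · rw [range_fin_succ]
      congr 1
      simp [h0]
lemma foldl_pstep (w : List A) : ∀ p : Profile Q A,
    List.foldl pstep p w = fun q q' =>
      {E | ∃ r E₀ E₁, E₀ ∈ p q r ∧ E₁ ∈ profileOf w r q' ∧ E = E₀ ∪ E₁} := by
  induction w with
  | nil =>
    intro p
    funext q q'
    ext E
    simp only [List.foldl_nil, Set.mem_setOf_eq, profileOf_nil]
    constructor
    · intro h
      exact ⟨q', E, ∅, h, ⟨rfl, rfl⟩, by simp⟩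
    · rintro ⟨r, E₀, E₁, h₀, ⟨rfl, rfl⟩, rfl⟩
      simpa using h₀
  | cons σ w ih =>
    intro p
    rw [List.foldl_cons, ih]
    funext q q'
    ext E
    simp only [Set.mem_setOf_eq, pstep, profileOf_cons]
    constructor
    · rintro ⟨r, E₀, E₁, ⟨s, E₀', h₀, rfl⟩, h₁, rfl⟩
      exact ⟨s, E₀', insert (s, enc σ, r) E₁, h₀, ⟨r, E₁, h₁, rfl⟩, by
        rw [Set.union_insert, Set.insert_union]⟩
    · rintro ⟨r, E₀, E₁, h₀, ⟨s, E₁', h₁, rfl⟩, rfl⟩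
      exact ⟨s, insert (r, enc σ, s) E₀, E₁', ⟨r, E₀, h₀, rfl⟩, h₁, by
        rw [Set.union_insert, Set.insert_union]⟩

noncomputable def pout (M : LVFA Q A l) (p : Profile Q A) : l :=
  ⨆ q, ⨆ q', ⨆ E ∈ p q q',
    M.init q ⊓ (⨅ e ∈ E, M.δ e.1 ((Fintype.equivFin A).symm e.2.1) e.2.2) ⊓ M.final q'

lemma pout_profileOf (M : LVFA Q A l) (w : List A) :
    pout M (profileOf w) = lvfaLang M w := by
  apply le_antisymm
  · refine iSup_le fun q => iSup_le fun q' => iSup_le fun E => iSup_le fun hE => ?_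
    obtain ⟨path, rfl, rfl, rfl⟩ := hE
    refine le_trans (le_of_eq ?_) (le_iSup _ path)
    congr 1
    congr 1
    rw [iInf_range]
    simp [enc]
  · refine iSup_le fun path => ?_
    refine le_trans (le_of_eq ?_)
      (le_iSup₂_of_le (path 0) (path (Fin.last w.length))
        (le_iSup₂_of_le
          (Set.range fun i : Fin w.length => (path i.castSucc, enc (w.get i), path i.succ))
          ⟨path, rfl, rfl, rfl⟩ le_rfl))
    congr 1
    congr 1
    rw [iInf_range]
    simp [enc]

theorem exists_lvdfa (f : List A → l) (hf : IsLRegular f) :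
    ∃ (Q' : Type) (_ : Fintype Q') (D : LVDFA Q' A l), ∀ w, lvdfaLang D w = f w := by
  classical
  obtain ⟨Q, hQ, M, hM⟩ := hf
  refine ⟨Profile Q A, inferInstance, ⟨pstep, profileOf [], pout M⟩, fun w => ?_⟩
  have key : List.foldl pstep (profileOf ([] : List A)) w = (profileOf w : Profile Q A) := by
    rw [foldl_pstep]
    funext q q'
    ext E
    simp only [Set.mem_setOf_eq, profileOf_nil]
    constructor
    · rintro ⟨r, E₀, E₁, ⟨rfl, rfl⟩, h₁, rfl⟩
      simpa using h₁
    · intro h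
      exact ⟨q, ∅, E, ⟨rfl, rfl⟩, h, by simp⟩
  show pout M (List.foldl pstep (profileOf []) w) = f w
  rw [key, pout_profileOf, hM]
end NFAtoDFA

section Concat
set_option linter.unusedSectionVars false
variable {l : Type*} [OrthomodularCompleteLattice l] {A : Type*}
  {Q₁ Q₂ : Type} [Fintype Q₁] [Fintype Q₂]

def cnext (D₁ : LVDFA Q₁ A l) (D₂ : LVDFA Q₂ A l) :
    Q₁ × Set (Q₁ × Q₂) → A → Q₁ × Set (Q₁ × Q₂) := fun s σ =>
  (D₁.next s.1 σ,
    insert (D₁.next s.1 σ, D₂.start) ((fun x => (x.1, D₂.next x.2 σ)) '' s.2))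

def cstart (D₁ : LVDFA Q₁ A l) (D₂ : LVDFA Q₂ A l) : Q₁ × Set (Q₁ × Q₂) :=
  (D₁.start, {(D₁.start, D₂.start)})

lemma concat_inv (D₁ : LVDFA Q₁ A l) (D₂ : LVDFA Q₂ A l) (w : List A) :
    List.foldl (cnext D₁ D₂) (cstart D₁ D₂) w =
      (w.foldl D₁.next D₁.start,
        {x | ∃ w₁ w₂, w₁ ++ w₂ = w ∧
          x = (w₁.foldl D₁.next D₁.start, w₂.foldl D₂.next D₂.start)}) := by
  induction w using List.reverseRecOn with
  | nil =>
    simp only [List.foldl_nil, cstart]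
    congr 1
    ext x
    simp only [Set.mem_singleton_iff, Set.mem_setOf_eq]
    constructor
    · rintro rfl; exact ⟨[], [], rfl, rfl⟩
    · rintro ⟨w₁, w₂, h, rfl⟩
      obtain ⟨rfl, rfl⟩ := List.append_eq_nil_iff.mp h
      rfl
  | append_singleton w σ ih =>
    rw [List.foldl_append, ih]
    simp only [List.foldl_cons, List.foldl_nil, cnext]
    congr 1
    · rw [List.foldl_append]; simp
    ext x
    simp only [Set.mem_insert_iff, Set.mem_image, Set.mem_setOf_eq]
    constructor
    · rintro (rfl | ⟨y, ⟨w₁, w₂, rfl, rfl⟩, rfl⟩)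
      · exact ⟨w ++ [σ], [], by simp, by simp [List.foldl_append]⟩
      · exact ⟨w₁, w₂ ++ [σ], by rw [← List.append_assoc], by simp [List.foldl_append]⟩
    · rintro ⟨w₁, w₂, h, rfl⟩
      rcases List.eq_nil_or_concat w₂ with rfl | ⟨w₂', σ', rfl⟩
      · left
        rw [List.append_nil] at h
        subst h
        simp [List.foldl_append]
      · right
        have h' : (w₁ ++ w₂').concat σ' = w.concat σ := by
          rw [List.concat_eq_append, List.concat_eq_append, List.append_assoc]
          rw [List.concat_eq_append] at h
          exact h
        obtain ⟨hw, hσ⟩ := List.concat_inj.mp h'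
        subst hσ
        exact ⟨(w₁.foldl D₁.next D₁.start, w₂'.foldl D₂.next D₂.start),
          ⟨w₁, w₂', hw, rfl⟩, by simp [List.concat_eq_append, List.foldl_append]⟩
end Concat

/-- `l`-regular languages are closed under concatenation. -/
theorem lregular_concat {l A : Type*} [OrthomodularCompleteLattice l] [Fintype A]
    (f g : List A → l) (hf : IsLRegular f) (hg : IsLRegular g) :
    IsLRegular (fun w => ⨆ w₁ : List A, ⨆ w₂ : List A, ⨆ _ : w₁ ++ w₂ = w, f w₁ ⊓ g w₂) := by
  classical
  obtain ⟨Q₁, hQ₁, D₁, h₁⟩ := exists_lvdfa f hf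
  obtain ⟨Q₂, hQ₂, D₂, h₂⟩ := exists_lvdfa g hg
  set D : LVDFA (Q₁ × Set (Q₁ × Q₂)) A l :=
    ⟨cnext D₁ D₂, cstart D₁ D₂, fun s => ⨆ x ∈ s.2, D₁.final x.1 ⊓ D₂.final x.2⟩ with hD
  have hL : ∀ w, lvdfaLang D w =
      ⨆ w₁ : List A, ⨆ w₂ : List A, ⨆ _ : w₁ ++ w₂ = w, f w₁ ⊓ g w₂ := by
    intro w
    have step1 : lvdfaLang D w =
        ⨆ x ∈ {x : Q₁ × Q₂ | ∃ w₁ w₂, w₁ ++ w₂ = w ∧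
          x = (w₁.foldl D₁.next D₁.start, w₂.foldl D₂.next D₂.start)},
          D₁.final x.1 ⊓ D₂.final x.2 := by
      show D.final (w.foldl D.next D.start) = _
      rw [hD]
      rw [concat_inv]
    rw [step1]
    apply le_antisymm
    · refine iSup₂_le fun x hx => ?_
      obtain ⟨w₁, w₂, rfl, rfl⟩ := hx
      have e1 : D₁.final (List.foldl D₁.next D₁.start w₁) = f w₁ := h₁ w₁
      have e2 : D₂.final (List.foldl D₂.next D₂.start w₂) = g w₂ := h₂ w₂
      refine le_trans (le_of_eq ?_)
        (le_iSup_of_le w₁ (le_iSup_of_le w₂ (le_iSup_of_le rfl le_rfl)))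
      rw [e1, e2]
    · refine iSup_le fun w₁ => iSup_le fun w₂ => iSup_le fun hw => ?_
      subst hw
      have e1 : D₁.final (List.foldl D₁.next D₁.start w₁) = f w₁ := h₁ w₁
      have e2 : D₂.final (List.foldl D₂.next D₂.start w₂) = g w₂ := h₂ w₂
      refine le_trans (le_of_eq ?_)
        (le_iSup₂_of_le (w₁.foldl D₁.next D₁.start, w₂.foldl D₂.next D₂.start)
          ⟨w₁, w₂, rfl, rfl⟩ le_rfl)
      rw [e1, e2]
  exact funext hL ▸ lvdfa_regular D
end

section
/- If A is an l-regular language over Σ, then its Kleene closure A*, defined by A*(ω) = ⋁{ A(ω₁) ∧ ⋯ ∧ A(ωₙ) : n ≥ 0, ω₁⋯ωₙ = ω } (so in particular A*(ε) ≥ 1, the empty concatenation contributing 1), is an l-regular language. -/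
namespace LStarAux

variable {l : Type*} [OrthomodularCompleteLattice l] {A : Type*} {Q : Type*}

theorem fin_iInf_succ {n : ℕ} (g : Fin (n + 1) → l) :
    (⨅ i, g i) = g 0 ⊓ ⨅ i : Fin n, g i.succ :=
  le_antisymm (le_inf (iInf_le _ 0) (le_iInf fun i => iInf_le _ i.succ))
    (le_iInf fun i => Fin.cases inf_le_left
      (fun j => le_trans inf_le_right (iInf_le _ j)) i)

/-- Sup over all paths starting at `q`, with accumulated value `x`. -/
def PathSup (M : LVFA Q A l) (x : l) (q : Q) (w : List A) : l :=
  ⨆ p : Fin (w.length + 1) → Q, ⨆ _ : p 0 = q,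
    x ⊓ (⨅ i : Fin w.length, M.δ (p i.castSucc) (w.get i) (p i.succ)) ⊓
      M.final (p (Fin.last w.length))

theorem pathSup_nil (M : LVFA Q A l) (x : l) (q : Q) :
    PathSup M x q [] = x ⊓ M.final q := by
  unfold PathSup
  simp only [List.length_nil]
  apply le_antisymm
  · refine iSup_le fun p => iSup_le fun hp => ?_
    have h0 : p (Fin.last 0) = q := by rw [show Fin.last 0 = 0 from rfl, hp]
    rw [h0]
    exact le_inf (le_trans inf_le_left inf_le_left) inf_le_right
  · refine le_trans ?_ (le_iSup _ (fun _ => q))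
    rw [iSup_pos rfl]
    simp

theorem pathSup_cons (M : LVFA Q A l) (x : l) (q : Q) (a : A) (w : List A) :
    PathSup M x q (a :: w) = ⨆ q' : Q, PathSup M (x ⊓ M.δ q a q') q' w := by
  unfold PathSup
  simp only [List.length_cons]
  apply le_antisymm
  · refine iSup_le fun p => iSup_le fun hp => ?_
    refine le_trans ?_ (le_iSup _ (p 1))
    refine le_trans ?_ (le_iSup _ (fun i => p i.succ))
    refine le_trans ?_ (le_iSup _ rfl)
    refine le_inf (le_inf ?_ ?_) ?_
    · refine le_inf (le_trans inf_le_left inf_le_left) ?_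
      refine le_trans (le_trans inf_le_left inf_le_right) ?_
      refine le_trans (iInf_le _ 0) ?_
      rw [show Fin.castSucc (0 : Fin (w.length + 1)) = 0 from rfl, hp,
        show ((a :: w).get (0 : Fin (w.length + 1))) = a from rfl,
        show Fin.succ (0 : Fin (w.length + 1)) = 1 from Fin.succ_zero_eq_one']
    · refine le_iInf fun i => ?_
      refine le_trans (le_trans inf_le_left inf_le_right) ?_
      refine le_trans (iInf_le _ i.succ) ?_
      rw [show (i.succ.castSucc : Fin (w.length + 2)) = i.castSucc.succ from rfl,
        List.get_cons_succ']
    · rw [show (Fin.last (w.length + 1)) = (Fin.last w.length).succ from rfl]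
      exact inf_le_right
  · refine iSup_le fun q' => iSup_le fun p => iSup_le fun hp => ?_
    refine le_trans ?_ (le_iSup _ (Fin.cons q p))
    rw [iSup_pos (@Fin.cons_zero (w.length + 1) (fun _ => Q) q p)]
    refine le_inf (le_inf ?_ ?_) ?_
    · exact le_trans inf_le_left (le_trans inf_le_left inf_le_left)
    · refine le_iInf fun j => ?_
      induction j using Fin.cases with
      | zero =>
          rw [show Fin.castSucc (0 : Fin (w.length + 1)) = 0 from rfl,
            Fin.cons_zero, show ((a :: w).get (0 : Fin (w.length + 1))) = a from rfl,
            show Fin.succ (0 : Fin (w.length + 1)) = 1 from Fin.succ_zero_eq_one',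
            show ((1 : Fin (w.length + 2))) = Fin.succ 0 from (Fin.succ_zero_eq_one').symm,
            Fin.cons_succ, hp]
          exact le_trans inf_le_left (le_trans inf_le_left inf_le_right)
      | succ i =>
          rw [show (i.succ.castSucc : Fin (w.length + 2)) = i.castSucc.succ from rfl,
            Fin.cons_succ, Fin.cons_succ, List.get_cons_succ']
          exact le_trans inf_le_left (le_trans inf_le_right (iInf_le _ i))
    · rw [show (Fin.last (w.length + 1)) = (Fin.last w.length).succ from rfl,
        Fin.cons_succ]
      exact inf_le_right

theorem pathSup_total (M : LVFA Q A l) (w : List A) :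
    (⨆ q : Q, PathSup M (M.init q) q w) = lvfaLang M w := by
  unfold lvfaLang PathSup
  apply le_antisymm
  · refine iSup_le fun q => iSup_le fun p => iSup_le fun hp => ?_
    subst hp
    exact le_iSup (fun p : Fin (w.length + 1) → Q => M.init (p 0) ⊓
      (⨅ i, M.δ (p i.castSucc) (w.get i) (p i.succ)) ⊓ M.final (p (Fin.last w.length))) p
  · refine iSup_le fun p => ?_
    refine le_trans ?_ (le_iSup _ (p 0))
    refine le_trans ?_ (le_iSup _ p)
    rw [iSup_pos rfl]

/-- Recognizability by a deterministic automaton with `l`-valued output. -/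
def DRec (f : List A → l) : Prop :=
  ∃ (n : ℕ) (step : Fin n → A → Fin n) (s₀ : Fin n) (out : Fin n → l),
    ∀ w : List A, f w = out (w.foldl step s₀)

theorem drec_of_dfa {S : Type*} [Fintype S] (step : S → A → S) (s₀ : S) (out : S → l)
    {f : List A → l} (hf : ∀ w, f w = out (w.foldl step s₀)) : DRec f := by
  classical
  let e := Fintype.equivFin S
  refine ⟨Fintype.card S, fun i a => e (step (e.symm i) a), e s₀,
    fun i => out (e.symm i), fun w => ?_⟩
  have key : ∀ (w : List A) (s : S),
      w.foldl (fun i a => e (step (e.symm i) a)) (e s) = e (w.foldl step s) := by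
    intro w
    induction w with
    | nil => intro s; rfl
    | cons a v ih =>
        intro s
        simp only [List.foldl_cons, Equiv.symm_apply_apply]
        exact ih (step s a)
  simp only [key w s₀, Equiv.symm_apply_apply]
  exact hf w

theorem drec_isLRegular {f : List A → l} (h : DRec f) : IsLRegular f := by
  classical
  obtain ⟨n, step, s₀, out, hf⟩ := h
  set M : LVFA (Fin n) A l :=
    ⟨fun q a q' => if step q a = q' then ⊤ else ⊥,
     fun q => if q = s₀ then ⊤ else ⊥, out⟩ with hM
  have key : ∀ (w : List A) (x : l) (s : Fin n),
      PathSup M x s w = x ⊓ out (w.foldl step s) := by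
    intro w
    induction w with
    | nil => intro x s; rw [pathSup_nil]; rfl
    | cons a w ih =>
        intro x s
        rw [pathSup_cons]
        simp only [ih]
        apply le_antisymm
        · refine iSup_le fun q' => ?_
          by_cases hq : step s a = q'
          · subst hq; simp [hM]
          · simp [hM, hq]
        · refine le_trans ?_ (le_iSup _ (step s a))
          simp [hM]
  refine ⟨Fin n, inferInstance, M, fun w => ?_⟩
  rw [← pathSup_total, hf]
  apply le_antisymm
  · refine iSup_le fun q => ?_
    rw [key]
    by_cases hq : q = s₀
    · subst hq; simp [hM]
    · simp [hM, hq]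
  · refine le_trans ?_ (le_iSup _ s₀)
    rw [key]
    simp [hM]

theorem isLRegular_drec [Fintype A] {f : List A → l} (h : IsLRegular f) : DRec f := by
  classical
  obtain ⟨Q, hQ, M, hM⟩ := h
  haveI := hQ
  let G : Finset l := (Finset.univ.image M.init) ∪
      (Finset.univ.image fun t : Q × A × Q => M.δ t.1 t.2.1 t.2.2)
  let Vm : Finset l := G.powerset.image fun s => s.inf id
  have hmul : ∀ x ∈ Vm, ∀ g ∈ G, x ⊓ g ∈ Vm := by
    intro x hx g hg
    simp only [Vm, Finset.mem_image, Finset.mem_powerset] at hx ⊢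
    obtain ⟨s, hs, rfl⟩ := hx
    refine ⟨insert g s, Finset.insert_subset hg hs, ?_⟩
    rw [Finset.inf_insert]
    simp [inf_comm]
  have hinit : ∀ q : Q, M.init q ∈ Vm := by
    intro q
    simp only [Vm, Finset.mem_image, Finset.mem_powerset]
    refine ⟨{M.init q}, ?_, by simp⟩
    simp only [Finset.singleton_subset_iff, G]
    exact Finset.mem_union_left _ (Finset.mem_image.2 ⟨q, Finset.mem_univ _, rfl⟩)
  have hdelta : ∀ (q : Q) (a : A) (q' : Q), M.δ q a q' ∈ G := fun q a q' =>
    Finset.mem_union_right _ (Finset.mem_image.2 ⟨(q, a, q'), Finset.mem_univ _, rfl⟩)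
  let V := {x : l // x ∈ Vm}
  let stepD : Finset (Q × V) → A → Finset (Q × V) := fun X a =>
    X.biUnion fun z => Finset.univ.image fun q' : Q =>
      (q', ⟨(z.2 : l) ⊓ M.δ z.1 a q', hmul _ z.2.2 _ (hdelta z.1 a q')⟩)
  let s₀D : Finset (Q × V) := Finset.univ.image fun q : Q => (q, ⟨M.init q, hinit q⟩)
  let outD : Finset (Q × V) → l := fun X => X.sup fun z => (z.2 : l) ⊓ M.final z.1
  have key : ∀ (w : List A) (X : Finset (Q × V)),
      outD (w.foldl stepD X) = ⨆ z ∈ X, PathSup M (z.2 : l) z.1 w := by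
    intro w
    induction w with
    | nil =>
        intro X
        rw [List.foldl_nil]
        simp only [outD, Finset.sup_eq_iSup, pathSup_nil]
    | cons a w ih =>
        intro X
        rw [List.foldl_cons, ih (stepD X a)]
        simp only [pathSup_cons]
        apply le_antisymm
        · refine iSup₂_le fun z' hz' => ?_
          obtain ⟨z, hz, hmem⟩ := Finset.mem_biUnion.1 hz'
          obtain ⟨q', -, rfl⟩ := Finset.mem_image.1 hmem
          refine le_trans ?_ (le_iSup₂ z hz)
          exact le_iSup (fun q' => PathSup M ((z.2 : l) ⊓ M.δ z.1 a q') q' w) q' 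
        · refine iSup₂_le fun z hz => iSup_le fun q' => ?_
          refine le_trans (le_refl _)
            (le_iSup₂ (f := fun z' (_ : z' ∈ stepD X a) => PathSup M (z'.2 : l) z'.1 w)
              (q', ⟨(z.2 : l) ⊓ M.δ z.1 a q', hmul _ z.2.2 _ (hdelta z.1 a q')⟩)
              (Finset.mem_biUnion.2 ⟨z, hz, Finset.mem_image.2 ⟨q', Finset.mem_univ _, rfl⟩⟩))
  refine drec_of_dfa stepD s₀D outD fun w => ?_
  rw [key w s₀D, ← hM w, ← pathSup_total]
  apply le_antisymm
  · refine iSup_le fun q => ?_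
    exact le_iSup₂ (f := fun z (_ : z ∈ s₀D) => PathSup M (z.2 : l) z.1 w)
      (q, ⟨M.init q, hinit q⟩) (Finset.mem_image.2 ⟨q, Finset.mem_univ _, rfl⟩)
  · refine iSup₂_le fun z hz => ?_
    obtain ⟨q, -, rfl⟩ := Finset.mem_image.1 hz
    exact le_iSup (fun q => PathSup M (M.init q) q w) q

theorem inf_shuffle (a b c d : l) : ((b ⊓ a) ⊓ c) ⊓ d = (a ⊓ b) ⊓ (c ⊓ d) := by
  ac_rfl

theorem drec_star {f : List A → l} (h : DRec f) :
    DRec (fun w : List A => ⨆ n : ℕ, ⨆ ws : Fin n → List A,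
      ⨆ _ : (List.ofFn ws).flatten = w, ⨅ i, f (ws i)) := by
  classical
  obtain ⟨m, step, s₀, out, hf⟩ := h
  set S2 := Finset (Fin m × Finset (Fin m)) with hS2
  let step1 : S2 → A → S2 := fun X a =>
    X.biUnion fun z => {(step z.1 a, z.2), (step s₀ a, insert z.1 z.2)}
  let Out : S2 → l := fun X => X.sup fun z => z.2.inf out ⊓ out z.1
  let X₀ : S2 := {(s₀, ∅)}
  let Inv : S2 → List A → l := fun X w =>
    ⨆ z ∈ X, ⨆ k : ℕ, ⨆ u : Fin (k + 1) → List A,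
      ⨆ _ : ((List.ofFn u).flatten = w ∧ ∀ i : Fin (k + 1), i ≠ 0 → u i ≠ []),
        (z.2.inf out ⊓ out (List.foldl step z.1 (u 0))) ⊓
          ⨅ i : Fin k, out (List.foldl step s₀ (u i.succ))
  have main : ∀ (w : List A) (X : S2), Out (List.foldl step1 X w) = Inv X w := by
    intro w
    induction w with
    | nil =>
        intro X
        rw [List.foldl_nil]
        simp only [Out, Finset.sup_eq_iSup, Inv]
        refine iSup_congr fun z => iSup_congr fun hz => ?_
        apply le_antisymm
        · refine le_trans ?_ (le_iSup _ 0)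
          refine le_trans ?_ (le_iSup _ (fun _ : Fin 1 => ([] : List A)))
          have hc : ((List.ofFn fun _ : Fin 1 => ([] : List A)).flatten = [] ∧
              ∀ i : Fin 1, i ≠ 0 → (fun _ : Fin 1 => ([] : List A)) i ≠ []) := by
            constructor
            · simp
            · intro i hi
              exact absurd (Subsingleton.elim i 0) hi
          rw [iSup_pos hc]
          simp
        · refine iSup_le fun k => iSup_le fun u => iSup_le fun hc => ?_
          obtain ⟨hflat, hne⟩ := hc
          match k, u, hflat, hne with
          | 0, u, hflat, hne =>
              have hu0 : u 0 = [] := by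
                have := List.flatten_eq_nil_iff.1 hflat
                exact this (u 0) (by simp [List.ofFn_succ])
              simp [hu0]
          | k + 1, u, hflat, hne =>
              exfalso
              have h1 : u 1 = [] := by
                refine List.flatten_eq_nil_iff.1 hflat (u 1) ?_
                rw [List.mem_ofFn]
                exact ⟨1, rfl⟩
              exact hne 1 (by simp [Fin.ext_iff]) h1
    | cons a w ih =>
        intro X
        rw [List.foldl_cons, ih (step1 X a)]
        apply le_antisymm
        · -- Inv (step1 X a) w ≤ Inv X (a :: w)
          refine iSup₂_le fun z' hz' => iSup_le fun k => iSup_le fun u => iSup_le fun hc => ?_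
          obtain ⟨hflat, hne⟩ := hc
          obtain ⟨z, hz, hmem⟩ := Finset.mem_biUnion.1 hz'
          rcases Finset.mem_insert.1 hmem with h1 | h2
          · -- z' = (step z.1 a, z.2) : extend current piece
            subst h1
            refine le_trans ?_ (le_iSup₂ z hz)
            refine le_trans ?_ (le_iSup _ k)
            refine le_trans ?_ (le_iSup _ (Fin.cons (a :: u 0) (fun j : Fin k => u j.succ)))
            have hc' : ((List.ofFn (Fin.cons (a :: u 0) (fun j : Fin k => u j.succ))).flatten
                  = a :: w ∧
                ∀ i : Fin (k + 1), i ≠ 0 →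
                  (Fin.cons (a :: u 0) (fun j : Fin k => u j.succ) : Fin (k+1) → List A) i ≠ []) := by
              constructor
              · rw [List.ofFn_succ, List.flatten_cons]
                simp only [Fin.cons_zero, Fin.cons_succ]
                rw [List.cons_append]
                rw [List.ofFn_succ, List.flatten_cons] at hflat
                rw [hflat]
              · intro i hi
                induction i using Fin.cases with
                | zero => exact absurd rfl hi
                | succ j =>
                    rw [Fin.cons_succ]
                    exact hne j.succ (Fin.succ_ne_zero j)
            rw [iSup_pos hc']
            simp only [Fin.cons_zero, Fin.cons_succ, List.foldl_cons]
            exact le_refl _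
          · -- z' = (step s₀ a, insert z.1 z.2) : close current piece, start new one
            rw [Finset.mem_singleton] at h2
            subst h2
            refine le_trans ?_ (le_iSup₂ z hz)
            refine le_trans ?_ (le_iSup _ (k + 1))
            refine le_trans ?_
              (le_iSup _ (Fin.cons [] (Fin.cons (a :: u 0) (fun j : Fin k => u j.succ))))
            have hc' : ((List.ofFn (Fin.cons ([] : List A)
                  (Fin.cons (a :: u 0) (fun j : Fin k => u j.succ)))).flatten = a :: w ∧
                ∀ i : Fin (k + 2), i ≠ 0 →
                  (Fin.cons ([] : List A) (Fin.cons (a :: u 0) (fun j : Fin k => u j.succ))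
                    : Fin (k+2) → List A) i ≠ []) := by
              constructor
              · rw [List.ofFn_succ, List.flatten_cons]
                simp only [Fin.cons_zero, Fin.cons_succ, List.nil_append]
                rw [List.ofFn_succ, List.flatten_cons]
                simp only [Fin.cons_zero, Fin.cons_succ]
                rw [List.cons_append]
                rw [List.ofFn_succ, List.flatten_cons] at hflat
                rw [hflat]
              · intro i hi
                induction i using Fin.cases with
                | zero => exact absurd rfl hi
                | succ j =>
                    rw [Fin.cons_succ]
                    induction j using Fin.cases with
                    | zero => rw [Fin.cons_zero]; exact List.cons_ne_nil _ _
                    | succ j' => rw [Fin.cons_succ]; exact hne j'.succ (Fin.succ_ne_zero j')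
            rw [iSup_pos hc']
            simp only [Fin.cons_zero, Fin.cons_succ, List.foldl_cons, List.foldl_nil]
            rw [fin_iInf_succ (fun i : Fin (k+1) => out (List.foldl step s₀
              ((Fin.cons (a :: u 0) (fun j : Fin k => u j.succ) : Fin (k+1) → List A) i)))]
            simp only [Fin.cons_zero, Fin.cons_succ, List.foldl_cons, Finset.inf_insert]
            rw [inf_shuffle]
        · -- Inv X (a :: w) ≤ Inv (step1 X a) w
          refine iSup₂_le fun z hz => iSup_le fun k => iSup_le fun u => iSup_le fun hc => ?_
          obtain ⟨hflat, hne⟩ := hc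
          rw [List.ofFn_succ, List.flatten_cons] at hflat
          rcases hu0 : u 0 with _ | ⟨b, v⟩
          · -- current piece is finished; the letter `a` starts a new piece
            rw [hu0, List.nil_append] at hflat
            match k, u, hflat, hne, hu0 with
            | 0, u, hflat, hne, hu0 => simp at hflat
            | k + 1, u, hflat, hne, hu0 =>
                rw [List.ofFn_succ, List.flatten_cons] at hflat
                have h10 : ((0 : Fin (k + 1)).succ : Fin (k + 2)) = 1 := by
                  simp [Fin.ext_iff]
                rw [h10] at hflat
                rcases hu1 : u 1 with _ | ⟨b, v⟩
                · exact absurd hu1 (hne 1 (by simp [Fin.ext_iff]))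
                · rw [hu1, List.cons_append] at hflat
                  injection hflat with hb hw
                  subst hb
                  refine le_trans ?_ (le_iSup₂ (f := fun z' (_ : z' ∈ step1 X b) =>
                      ⨆ k : ℕ, ⨆ u : Fin (k + 1) → List A,
                        ⨆ _ : ((List.ofFn u).flatten = w ∧
                            ∀ i : Fin (k + 1), i ≠ 0 → u i ≠ []),
                          (z'.2.inf out ⊓ out (List.foldl step z'.1 (u 0))) ⊓
                            ⨅ i : Fin k, out (List.foldl step s₀ (u i.succ)))
                    (step s₀ b, insert z.1 z.2)
                    (Finset.mem_biUnion.2 ⟨z, hz, Finset.mem_insert.2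
                      (Or.inr (Finset.mem_singleton_self _))⟩))
                  refine le_trans ?_ (le_iSup _ k)
                  refine le_trans ?_ (le_iSup _ (Fin.cons v (fun j : Fin k => u j.succ.succ)))
                  have hc' : ((List.ofFn (Fin.cons v (fun j : Fin k => u j.succ.succ))).flatten
                        = w ∧
                      ∀ i : Fin (k + 1), i ≠ 0 →
                        (Fin.cons v (fun j : Fin k => u j.succ.succ) : Fin (k+1) → List A)
                          i ≠ []) := by
                    constructor
                    · rw [List.ofFn_succ, List.flatten_cons]
                      simp only [Fin.cons_zero, Fin.cons_succ]
                      rw [hw]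
                    · intro i hi
                      induction i using Fin.cases with
                      | zero => exact absurd rfl hi
                      | succ j =>
                          rw [Fin.cons_succ]
                          exact hne j.succ.succ (Fin.succ_ne_zero _)
                  rw [iSup_pos hc']
                  simp only [Fin.cons_zero, Fin.cons_succ, hu0, List.foldl_nil,
                    Finset.inf_insert]
                  rw [fin_iInf_succ (fun i : Fin (k+1) => out (List.foldl step s₀ (u i.succ)))]
                  rw [h10, hu1, List.foldl_cons, inf_shuffle]
          · -- the letter `a` continues the current piece
            rw [hu0, List.cons_append] at hflat
            injection hflat with hb hw
            subst hb
            refine le_trans ?_ (le_iSup₂ (f := fun z' (_ : z' ∈ step1 X b) =>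
                ⨆ k : ℕ, ⨆ u : Fin (k + 1) → List A,
                  ⨆ _ : ((List.ofFn u).flatten = w ∧
                      ∀ i : Fin (k + 1), i ≠ 0 → u i ≠ []),
                    (z'.2.inf out ⊓ out (List.foldl step z'.1 (u 0))) ⊓
                      ⨅ i : Fin k, out (List.foldl step s₀ (u i.succ)))
              (step z.1 b, z.2)
              (Finset.mem_biUnion.2 ⟨z, hz, Finset.mem_insert_self _ _⟩))
            refine le_trans ?_ (le_iSup _ k)
            refine le_trans ?_ (le_iSup _ (Fin.cons v (fun j : Fin k => u j.succ)))
            have hc' : ((List.ofFn (Fin.cons v (fun j : Fin k => u j.succ))).flatten = w ∧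
                ∀ i : Fin (k + 1), i ≠ 0 →
                  (Fin.cons v (fun j : Fin k => u j.succ) : Fin (k+1) → List A) i ≠ []) := by
              constructor
              · rw [List.ofFn_succ, List.flatten_cons]
                simp only [Fin.cons_zero, Fin.cons_succ]
                rw [hw]
              · intro i hi
                induction i using Fin.cases with
                | zero => exact absurd rfl hi
                | succ j =>
                    rw [Fin.cons_succ]
                    exact hne j.succ (Fin.succ_ne_zero _)
            rw [iSup_pos hc']
            simp only [Fin.cons_zero, Fin.cons_succ, hu0, List.foldl_cons]
            exact le_refl _
  let stepO : Option S2 → A → Option S2 := fun o a => some (step1 (o.getD X₀) a)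
  let outO : Option S2 → l := fun o => o.elim ⊤ Out
  have hsome : ∀ (w : List A) (X : S2),
      List.foldl stepO (some X) w = some (List.foldl step1 X w) := by
    intro w
    induction w with
    | nil => intro X; rfl
    | cons a w ih =>
        intro X
        rw [List.foldl_cons, List.foldl_cons]
        exact ih (step1 X a)
  refine drec_of_dfa stepO none outO fun w => ?_
  cases w with
  | nil =>
      show (⨆ n : ℕ, ⨆ ws : Fin n → List A,
          ⨆ _ : (List.ofFn ws).flatten = ([] : List A), ⨅ i, f (ws i)) = ⊤
      apply le_antisymm le_top
      refine le_trans ?_ (le_iSup _ 0)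
      refine le_trans ?_ (le_iSup _ (fun i : Fin 0 => i.elim0))
      have hc : (List.ofFn (fun i : Fin 0 => (i.elim0 : List A))).flatten = ([] : List A) := by
        simp
      rw [iSup_pos hc]
      exact le_iInf fun i => i.elim0
  | cons a w' =>
      have hstep : List.foldl stepO none (a :: w') = some (List.foldl step1 X₀ (a :: w')) := by
        rw [List.foldl_cons, List.foldl_cons]
        exact hsome w' (step1 X₀ a)
      rw [hstep, show outO (some (List.foldl step1 X₀ (a :: w')))
        = Out (List.foldl step1 X₀ (a :: w')) from rfl, main (a :: w') X₀]
      -- ⊢ gstar (a :: w') = Inv X₀ (a :: w')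
      apply le_antisymm
      · -- gstar ≤ Inv
        refine iSup_le fun N => iSup_le fun ws => iSup_le fun hflat => ?_
        set L : List (List A) := (List.ofFn ws).filter (fun x => !x.isEmpty) with hL
        have hLf : L.flatten = a :: w' := by
          rw [hL, List.flatten_filter_not_isEmpty]
          exact hflat
        have hLne : L ≠ [] := by
          intro hnil
          rw [hnil] at hLf
          exact List.cons_ne_nil a w' hLf.symm
        obtain ⟨x, t, hxt⟩ := List.exists_cons_of_ne_nil hLne
        have hmemL : ∀ y ∈ L, y ≠ [] := by
          intro y hy
          have h2 := (List.mem_filter.1 hy).2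
          simpa using h2
        have hLofn : List.ofFn (Fin.cons x t.get : Fin (t.length + 1) → List A) = L := by
          rw [List.ofFn_succ]
          simp only [Fin.cons_zero, Fin.cons_succ]
          rw [List.ofFn_get]
          exact hxt.symm
        refine le_trans ?_ (le_iSup₂ (f := fun z (_ : z ∈ X₀) =>
            ⨆ k : ℕ, ⨆ u : Fin (k + 1) → List A,
              ⨆ _ : ((List.ofFn u).flatten = a :: w' ∧
                  ∀ i : Fin (k + 1), i ≠ 0 → u i ≠ []),
                (z.2.inf out ⊓ out (List.foldl step z.1 (u 0))) ⊓
                  ⨅ i : Fin k, out (List.foldl step s₀ (u i.succ)))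
          (s₀, (∅ : Finset (Fin m))) (Finset.mem_singleton_self _))
        refine le_trans ?_ (le_iSup _ t.length)
        refine le_trans ?_ (le_iSup _ (Fin.cons x t.get))
        have hc' : ((List.ofFn (Fin.cons x t.get : Fin (t.length + 1) → List A)).flatten
              = a :: w' ∧
            ∀ i : Fin (t.length + 1), i ≠ 0 →
              (Fin.cons x t.get : Fin (t.length + 1) → List A) i ≠ []) := by
          refine ⟨by rw [hLofn]; exact hLf, fun i _ => ?_⟩
          refine hmemL _ ?_
          rw [← hLofn, List.mem_ofFn]
          exact ⟨i, rfl⟩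
        rw [iSup_pos hc']
        have hval : ∀ j : Fin (t.length + 1),
            (⨅ i : Fin N, f (ws i)) ≤
              out (List.foldl step s₀ ((Fin.cons x t.get : Fin (t.length + 1) → List A) j)) := by
          intro j
          have hmem : (Fin.cons x t.get : Fin (t.length + 1) → List A) j ∈ List.ofFn ws := by
            have hjL : (Fin.cons x t.get : Fin (t.length + 1) → List A) j ∈ L := by
              rw [← hLofn, List.mem_ofFn]
              exact ⟨j, rfl⟩
            exact (List.mem_filter.1 hjL).1
          obtain ⟨i, hi⟩ := List.mem_ofFn.1 hmem
          refine le_trans (iInf_le _ i) ?_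
          rw [hi, hf]
        exact le_inf (le_inf (le_trans le_top (le_of_eq Finset.inf_empty.symm)) (hval 0))
          (le_iInf fun i => hval i.succ)
      · -- Inv ≤ gstar
        refine iSup₂_le fun z hz => iSup_le fun k => iSup_le fun u => iSup_le fun hc => ?_
        rw [Finset.mem_singleton] at hz
        subst hz
        refine le_trans ?_ (le_iSup _ (k + 1))
        refine le_trans ?_ (le_iSup _ u)
        rw [iSup_pos hc.1]
        rw [fin_iInf_succ (fun i : Fin (k + 1) => f (u i))]
        simp only [Finset.inf_empty, top_inf_eq, hf]
        exact le_refl _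

end LStarAux

/-- `l`-regular languages are closed under Kleene closure. -/
theorem lregular_star {l A : Type*} [OrthomodularCompleteLattice l] [Fintype A]
    (f : List A → l) (hf : IsLRegular f) :
    IsLRegular (fun w => ⨆ n : ℕ, ⨆ ws : Fin n → List A,
      ⨆ _ : (List.ofFn ws).flatten = w, ⨅ i, f (ws i)) :=
  LStarAux.drec_isLRegular (LStarAux.drec_star (LStarAux.isLRegular_drec hf))
end
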